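/- Let C be a finite algebra, A, B ≤ C. Let A₁,…,Aₘ be representatives of all Aut(C)-orbits on copies of A in C, with orbit sizes |O(Aᵢ)|. Then [A:B]·|O(B)| = Σᵢ |O(Aᵢ)|·[Aᵢ:B:C]_orb, where [A:B] is the number of copies of A in B, |O(B)| is the size of the orbit of B under Aut(C), and [Aᵢ:B:C]_orb is the number of subalgebras in the orbit of B containing Aᵢ. -/
import Mathlib


/-- `B₀` is a copy of `B` in `C`: a subgroup of `C` isomorphic to `B`. -/
def IsCopy {C : Type*} [Group C] (B₀ B : Subgroup C) : Prop :=
  Nonempty (B₀ ≃* B)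

/-- `B₀` lies in the orbit of `B` under the natural action of `Aut(C)` on subgroups. -/
def InOrbit {C : Type*} [Group C] (B₀ B : Subgroup C) : Prop :=
  ∃ f : C ≃* C, Subgroup.map f.toMonoidHom B = B₀

section Aux

variable {C : Type*} [Group C]

lemma isCopy_trans {A B D : Subgroup C} (h1 : IsCopy A B) (h2 : IsCopy B D) : IsCopy A D :=
  ⟨h1.some.trans h2.some⟩

lemma isCopy_of_map (f : C ≃* C) (K : Subgroup C) : IsCopy (Subgroup.map f.toMonoidHom K) K :=
  ⟨(f.subgroupMap K).symm⟩

lemma inOrbit_isCopy {A₀ A : Subgroup C} (h : InOrbit A₀ A) : IsCopy A₀ A := by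
  obtain ⟨f, rfl⟩ := h
  exact isCopy_of_map f A

lemma map_trans (f g : C ≃* C) (K : Subgroup C) :
    Subgroup.map (f.trans g).toMonoidHom K =
      Subgroup.map g.toMonoidHom (Subgroup.map f.toMonoidHom K) := by
  rw [Subgroup.map_map]
  rfl

lemma inOrbit_map {B₀ B : Subgroup C} (g : C ≃* C) (h : InOrbit B₀ B) :
    InOrbit (Subgroup.map g.toMonoidHom B₀) B := by
  obtain ⟨f, rfl⟩ := h
  exact ⟨f.trans g, map_trans f g B⟩

lemma map_symm_map (g : C ≃* C) (K : Subgroup C) :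
    Subgroup.map g.symm.toMonoidHom (Subgroup.map g.toMonoidHom K) = K := by
  rw [← map_trans]
  ext x
  simp [Subgroup.mem_map]

lemma inOrbit_map_iff {B₀ B : Subgroup C} (g : C ≃* C) :
    InOrbit (Subgroup.map g.toMonoidHom B₀) B ↔ InOrbit B₀ B := by
  constructor
  · intro h
    have := inOrbit_map g.symm h
    rwa [map_symm_map] at this
  · exact inOrbit_map g

lemma subgroup_map_le_map_iff (g : C ≃* C) {K L : Subgroup C} :
    Subgroup.map g.toMonoidHom K ≤ Subgroup.map g.toMonoidHom L ↔ K ≤ L :=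
  Subgroup.map_le_map_iff_of_injective g.injective

/-- The action of an automorphism on subgroups, as an equiv. -/
def mapEquiv (g : C ≃* C) : Subgroup C ≃ Subgroup C where
  toFun K := Subgroup.map g.toMonoidHom K
  invFun K := Subgroup.map g.symm.toMonoidHom K
  left_inv K := map_symm_map g K
  right_inv K := by
    have := map_symm_map g.symm K
    simpa using this

lemma isCopy_map_iff (g : C ≃* C) {K A : Subgroup C} :
    IsCopy (Subgroup.map g.toMonoidHom K) A ↔ IsCopy K A := by
  constructor
  · intro h
    exact isCopy_trans ⟨(g.subgroupMap K)⟩ h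
  · intro h
    exact isCopy_trans (isCopy_of_map g K) h

/-- number of copies of A inside a subgroup is orbit-invariant -/
lemma card_copies_eq {A B₀ B : Subgroup C} (h : InOrbit B₀ B) :
    Nat.card {A₀ : Subgroup C // A₀ ≤ B₀ ∧ IsCopy A₀ A}
      = Nat.card {A₀ : Subgroup C // A₀ ≤ B ∧ IsCopy A₀ A} := by
  obtain ⟨f, rfl⟩ := h
  refine (Nat.card_congr (Equiv.subtypeEquiv (mapEquiv f) fun K => ?_)).symm
  show K ≤ B ∧ IsCopy K A ↔
    Subgroup.map f.toMonoidHom K ≤ Subgroup.map f.toMonoidHom B ∧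
      IsCopy (Subgroup.map f.toMonoidHom K) A
  rw [subgroup_map_le_map_iff, isCopy_map_iff]

/-- number of members of orbit of B containing a given subgroup depends only on the
orbit of that subgroup -/
lemma card_over_eq {A₀ Ai B : Subgroup C} (h : InOrbit A₀ Ai) :
    Nat.card {B₀ : Subgroup C // A₀ ≤ B₀ ∧ InOrbit B₀ B}
      = Nat.card {B₀ : Subgroup C // Ai ≤ B₀ ∧ InOrbit B₀ B} := by
  obtain ⟨f, rfl⟩ := h
  refine (Nat.card_congr (Equiv.subtypeEquiv (mapEquiv f) fun K => ?_)).symm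
  show Ai ≤ K ∧ InOrbit K B ↔
    Subgroup.map f.toMonoidHom Ai ≤ Subgroup.map f.toMonoidHom K ∧
      InOrbit (Subgroup.map f.toMonoidHom K) B
  rw [subgroup_map_le_map_iff, inOrbit_map_iff]

lemma nat_card_sigma {ι : Type*} [Fintype ι] (g : ι → Type*) [∀ i, Finite (g i)] :
    Nat.card (Sigma g) = ∑ i, Nat.card (g i) := by
  haveI : ∀ i, Fintype (g i) := fun i => Fintype.ofFinite _
  simp [Nat.card_eq_fintype_card, Fintype.card_sigma]

end Aux

theorem stmt1 {C : Type*} [Group C] [Finite C] (A B : Subgroup C)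
    (m : ℕ) (As : Fin m → Subgroup C)
    (hcopy : ∀ i, IsCopy (As i) A)
    (hpart : ∀ A₀ : Subgroup C, IsCopy A₀ A → ∃! i, InOrbit A₀ (As i)) :
    Nat.card {A₀ : Subgroup C // A₀ ≤ B ∧ IsCopy A₀ A} *
        Nat.card {B₀ : Subgroup C // InOrbit B₀ B} =
      ∑ i : Fin m,
        Nat.card {A₀ : Subgroup C // InOrbit A₀ (As i)} *
          Nat.card {B₀ : Subgroup C // As i ≤ B₀ ∧ InOrbit B₀ B} := by
  classical
  -- the set of pairs counted two ways
  set T : Type _ := {p : Subgroup C × Subgroup C //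
    (p.1 ≤ p.2 ∧ IsCopy p.1 A) ∧ InOrbit p.2 B} with hT
  -- choice of orbit index
  have idx_spec : ∀ (A₀ : Subgroup C) (h : IsCopy A₀ A),
      InOrbit A₀ (As (hpart A₀ h).choose) := fun A₀ h => (hpart A₀ h).choose_spec.1
  have idx_unique : ∀ (A₀ : Subgroup C) (h : IsCopy A₀ A) (j : Fin m),
      InOrbit A₀ (As j) → j = (hpart A₀ h).choose := fun A₀ h j hj =>
    (hpart A₀ h).choose_spec.2 j hj
  -- First equiv : T ≃ Σ B₀ in orbit of B, copies of A in B₀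
  have e1 : T ≃ (B₀ : {B₀ : Subgroup C // InOrbit B₀ B}) ×
      {A₀ : Subgroup C // A₀ ≤ B₀.1 ∧ IsCopy A₀ A} :=
    { toFun := fun p => ⟨⟨p.1.2, p.2.2⟩, ⟨p.1.1, p.2.1⟩⟩
      invFun := fun q => ⟨⟨q.2.1, q.1.1⟩, ⟨q.2.2, q.1.2⟩⟩
      left_inv := fun p => rfl
      right_inv := fun q => rfl }
  -- Second equiv : T ≃ Σ i, Σ A₀ in orbit of Aᵢ, members of orbit of B over A₀
  have e2 : T ≃ (i : Fin m) × (A₀ : {A₀ : Subgroup C // InOrbit A₀ (As i)}) ×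
      {B₀ : Subgroup C // A₀.1 ≤ B₀ ∧ InOrbit B₀ B} :=
    { toFun := fun p =>
        ⟨(hpart p.1.1 p.2.1.2).choose, ⟨p.1.1, idx_spec p.1.1 p.2.1.2⟩,
          ⟨p.1.2, p.2.1.1, p.2.2⟩⟩
      invFun := fun q =>
        ⟨⟨q.2.1.1, q.2.2.1⟩,
          ⟨q.2.2.2.1, isCopy_trans (inOrbit_isCopy q.2.1.2) (hcopy q.1)⟩, q.2.2.2.2⟩
      left_inv := fun p => rfl
      right_inv := fun q => by
        obtain ⟨i, ⟨A₀, hA₀⟩, ⟨B₀, hB₀⟩⟩ := q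
        have hc : IsCopy A₀ A := isCopy_trans (inOrbit_isCopy hA₀) (hcopy i)
        have : i = (hpart A₀ hc).choose := idx_unique A₀ hc i hA₀
        subst this
        rfl }
  -- finiteness
  haveI : Finite (Subgroup C) := by
    have : Function.Injective (fun H : Subgroup C => (H : Set C)) := fun _ _ h =>
      SetLike.coe_injective h
    exact Finite.of_injective _ this
  haveI : Fintype {B₀ : Subgroup C // InOrbit B₀ B} := Fintype.ofFinite _
  haveI : ∀ i : Fin m, Fintype {A₀ : Subgroup C // InOrbit A₀ (As i)} := fun i =>
    Fintype.ofFinite _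
  -- compute via e1
  have hL : Nat.card T =
      Nat.card {A₀ : Subgroup C // A₀ ≤ B ∧ IsCopy A₀ A} *
        Nat.card {B₀ : Subgroup C // InOrbit B₀ B} := by
    rw [Nat.card_congr e1, nat_card_sigma]
    have : ∀ B₀ : {B₀ : Subgroup C // InOrbit B₀ B},
        Nat.card {A₀ : Subgroup C // A₀ ≤ B₀.1 ∧ IsCopy A₀ A} =
          Nat.card {A₀ : Subgroup C // A₀ ≤ B ∧ IsCopy A₀ A} := fun B₀ =>
      card_copies_eq B₀.2
    rw [Finset.sum_congr rfl fun B₀ _ => this B₀, Finset.sum_const, Finset.card_univ,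
      smul_eq_mul, ← Nat.card_eq_fintype_card, mul_comm]
  -- compute via e2
  have hR : Nat.card T =
      ∑ i : Fin m,
        Nat.card {A₀ : Subgroup C // InOrbit A₀ (As i)} *
          Nat.card {B₀ : Subgroup C // As i ≤ B₀ ∧ InOrbit B₀ B} := by
    rw [Nat.card_congr e2, nat_card_sigma]
    refine Finset.sum_congr rfl fun i _ => ?_
    rw [nat_card_sigma]
    have : ∀ A₀ : {A₀ : Subgroup C // InOrbit A₀ (As i)},
        Nat.card {B₀ : Subgroup C // A₀.1 ≤ B₀ ∧ InOrbit B₀ B} =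
          Nat.card {B₀ : Subgroup C // As i ≤ B₀ ∧ InOrbit B₀ B} := fun A₀ =>
      card_over_eq A₀.2
    rw [Finset.sum_congr rfl fun A₀ _ => this A₀, Finset.sum_const, Finset.card_univ,
      smul_eq_mul, ← Nat.card_eq_fintype_card]
  rw [← hL, hR]
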